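/- Let M be an n×n complex matrix whose rows all sum to the same value α·σ·√n with |α| > 0 and where Y = M satisfies Y·φ = ασ√n·φ for φ = (1,...,1)ᵀ. Fix k and let B be the matrix obtained from Y by replacing the k-th row with zero. Then any unit vector ζ with B·ζ̄ = 0 satisfies dist(ζ, span{φ}) ≥ |α|σ√n / (2 s₁(Y)), provided n ≥ 2, where s₁(Y) is the largest singular value of Y. -/

import Mathlib

/-- Euclidean norm of a complex vector. -/
noncomputable def cenorm {ι : Type*} [Fintype ι] (v : ι → ℂ) : ℝ :=
  Real.sqrt (∑ i, ‖v i‖ ^ 2)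

/-- Largest singular value (operator norm) of a complex matrix. -/
noncomputable def sone {ι κ : Type*} [Fintype ι] [Fintype κ] (B : Matrix ι κ ℂ) : ℝ :=
  sSup {r | ∃ x : κ → ℂ, cenorm x = 1 ∧ r = cenorm (B.mulVec x)}

/-- Euclidean distance from a vector to a subspace. -/
noncomputable def distE {ι : Type*} [Fintype ι] (v : ι → ℂ)
    (H : Submodule ℂ (ι → ℂ)) : ℝ :=
  sInf {r | ∃ h ∈ H, r = cenorm (v - h)}

lemma enorm_nonneg' {ι : Type*} [Fintype ι] (v : ι → ℂ) : 0 ≤ cenorm v :=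
  Real.sqrt_nonneg _

lemma enorm_sq_eq {ι : Type*} [Fintype ι] (v : ι → ℂ) :
    cenorm v ^ 2 = ∑ i, ‖v i‖ ^ 2 :=
  Real.sq_sqrt (Finset.sum_nonneg fun _ _ => sq_nonneg _)

lemma enorm_smul' {ι : Type*} [Fintype ι] (c : ℂ) (v : ι → ℂ) :
    cenorm (c • v) = ‖c‖ * cenorm v := by
  unfold cenorm
  simp only [Pi.smul_apply, smul_eq_mul, norm_mul, mul_pow]
  rw [← Finset.mul_sum, Real.sqrt_mul (sq_nonneg _), Real.sqrt_sq (norm_nonneg _)]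

lemma enorm_eq_zero_iff {ι : Type*} [Fintype ι] (v : ι → ℂ) :
    cenorm v = 0 ↔ v = 0 := by
  unfold cenorm
  rw [Real.sqrt_eq_zero (Finset.sum_nonneg fun _ _ => sq_nonneg _)]
  constructor
  · intro h
    funext i
    have := (Finset.sum_eq_zero_iff_of_nonneg (fun _ _ => sq_nonneg _)).mp h i (Finset.mem_univ i)
    simpa using this
  · intro h; simp [h]

lemma mulVec_enorm_le_frob {n : ℕ} (Y : Matrix (Fin n) (Fin n) ℂ) (x : Fin n → ℂ) :
    cenorm (Y.mulVec x) ≤ Real.sqrt (∑ i, ∑ j, ‖Y i j‖ ^ 2) * cenorm x := by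
  unfold cenorm
  rw [← Real.sqrt_mul (Finset.sum_nonneg fun _ _ => Finset.sum_nonneg fun _ _ => sq_nonneg _)]
  apply Real.sqrt_le_sqrt
  rw [Finset.sum_mul]
  apply Finset.sum_le_sum
  intro i _
  calc ‖Y.mulVec x i‖ ^ 2 ≤ (∑ j, ‖Y i j‖ * ‖x j‖) ^ 2 := by
        apply pow_le_pow_left₀ (norm_nonneg _)
        simpa [Matrix.mulVec, dotProduct] using
          (norm_sum_le Finset.univ (fun j => Y i j * x j)).trans (le_of_eq (by simp))
    _ ≤ (∑ j, ‖Y i j‖ ^ 2) * ∑ j, ‖x j‖ ^ 2 :=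
        Finset.sum_mul_sq_le_sq_mul_sq _ _ _

lemma enorm_mulVec_le_sone {n : ℕ} (Y : Matrix (Fin n) (Fin n) ℂ) (x : Fin n → ℂ) :
    cenorm (Y.mulVec x) ≤ sone Y * cenorm x := by
  have hbdd : BddAbove {r | ∃ x : Fin n → ℂ, cenorm x = 1 ∧ r = cenorm (Y.mulVec x)} := by
    refine ⟨Real.sqrt (∑ i, ∑ j, ‖Y i j‖ ^ 2), ?_⟩
    rintro r ⟨y, hy, rfl⟩
    simpa [hy] using mulVec_enorm_le_frob Y y
  by_cases hx : x = 0
  · simp [hx, cenorm, Matrix.mulVec_zero]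
  · have hex : cenorm x ≠ 0 := fun h => hx ((enorm_eq_zero_iff x).mp h)
    have hexpos : 0 < cenorm x := lt_of_le_of_ne (enorm_nonneg' x) (Ne.symm hex)
    set u : Fin n → ℂ := ((cenorm x : ℂ))⁻¹ • x with hu
    have hnu : cenorm u = 1 := by
      rw [hu, enorm_smul']
      rw [norm_inv]
      simp only [Complex.norm_real, Real.norm_eq_abs, abs_of_pos hexpos]
      field_simp
    have hmem : cenorm (Y.mulVec u) ∈ {r | ∃ x : Fin n → ℂ, cenorm x = 1 ∧ r = cenorm (Y.mulVec x)} :=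
      ⟨u, hnu, rfl⟩
    have hle : cenorm (Y.mulVec u) ≤ sone Y := le_csSup hbdd hmem
    have hmv : Y.mulVec u = ((cenorm x : ℂ))⁻¹ • Y.mulVec x := by
      rw [hu, Matrix.mulVec_smul]
    have : cenorm (Y.mulVec u) = (cenorm x)⁻¹ * cenorm (Y.mulVec x) := by
      rw [hmv, enorm_smul', norm_inv]
      simp [abs_of_pos hexpos]
    rw [this] at hle
    rw [inv_mul_le_iff₀ hexpos] at hle
    linarith [hle]

lemma sum_sq_shift {n : ℕ} (w : Fin n → ℂ) (c : ℂ) (hw : ∑ i, w i = 0) :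
    ∑ i, ‖w i + c‖ ^ 2 = (∑ i, ‖w i‖ ^ 2) + n * ‖c‖ ^ 2 := by
  have hns : ∀ z : ℂ, ‖z‖ ^ 2 = Complex.normSq z := fun z => by
    rw [← Complex.sq_norm]
  simp_rw [hns, Complex.normSq_add]
  rw [Finset.sum_add_distrib, Finset.sum_add_distrib]
  have h1 : ∑ _i : Fin n, Complex.normSq c = n * Complex.normSq c := by
    simp [Finset.sum_const, mul_comm]
  have h2 : ∑ i : Fin n, 2 * (w i * (starRingEnd ℂ) c).re = 0 := by
    rw [← Finset.mul_sum, ← Complex.re_sum, ← Finset.sum_mul, hw]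
    simp
  rw [h1, h2]
  ring

set_option maxHeartbeats 1000000

/-- If `Y φ = ασ√n φ` for the all-ones vector `φ`, `B` is `Y` with the `k`-th row
zeroed out, and `ζ` is a unit vector with `B ζ̄ = 0`, then
`dist(ζ, span{φ}) ≥ |α| σ √n / (2 s₁(Y))` (for `n ≥ 2`). -/
theorem dist_nullvector_to_ones {n : ℕ} (hn : 2 ≤ n)
    (Y : Matrix (Fin n) (Fin n) ℂ) (σ : ℝ) (hσ : 0 < σ) (α : ℂ) (hα : α ≠ 0)
    (hY : Y.mulVec (fun _ => 1) = (α * (σ : ℂ) * (Real.sqrt n : ℂ)) • fun _ => (1 : ℂ))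
    (k : Fin n) (ζ : Fin n → ℂ) (hζ : cenorm ζ = 1)
    (hB : (Matrix.of fun i j => if i = k then 0 else Y i j).mulVec
        (fun i => starRingEnd ℂ (ζ i)) = 0) :
    ‖α‖ * σ * Real.sqrt n / (2 * sone Y)
      ≤ distE ζ (Submodule.span ℂ {fun _ => (1 : ℂ)}) := by

  have hn0 : (0:ℝ) < n := by
    have : (2:ℝ) ≤ n := by exact_mod_cast hn
    linarith
  have hn2 : (2:ℝ) ≤ n := by exact_mod_cast hn
  have hnC : (n:ℂ) ≠ 0 := by exact_mod_cast (by omega : n ≠ 0)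
  set φ : Fin n → ℂ := fun _ => 1 with hφdef
  set μ : ℂ := α * (σ:ℂ) * (Real.sqrt n : ℂ) with hμdef
  set s : ℝ := sone Y with hsdef
  set m : ℝ := ‖μ‖ with hmdef
  have hsqn : (0:ℝ) < Real.sqrt n := Real.sqrt_pos.mpr hn0
  have hm : 0 < m := by
    rw [hmdef, hμdef]
    simp only [norm_mul, Complex.norm_real, Real.norm_eq_abs, abs_of_pos hσ, abs_of_pos hsqn]
    have : 0 < ‖α‖ := by
      simpa [norm_pos_iff] using hα
    positivity
  have hmval : m = ‖α‖ * σ * Real.sqrt n := by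
    rw [hmdef, hμdef]
    simp [norm_mul, Complex.norm_real, abs_of_pos hσ, abs_of_pos hsqn]
  -- norm of φ
  have hφnorm : cenorm φ = Real.sqrt n := by
    unfold cenorm
    simp [hφdef]
  -- m ≤ s
  have hms : m ≤ s := by
    have h1 : cenorm (Y.mulVec φ) ≤ s * Real.sqrt n := by
      rw [← hφnorm]; exact enorm_mulVec_le_sone Y φ
    have h2 : cenorm (Y.mulVec φ) = m * Real.sqrt n := by
      rw [hY]
      unfold cenorm
      have h1 : ∀ x : Fin n, ‖(μ • φ) x‖ ^ 2 = m ^ 2 := by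
        intro x
        rw [hφdef]
        simp [hmdef]
      simp_rw [h1]
      rw [Finset.sum_const, Finset.card_univ, Fintype.card_fin, nsmul_eq_mul,
        mul_comm ((n:ℝ)) (m^2), Real.sqrt_mul (by positivity), Real.sqrt_sq hm.le]
    rw [h2] at h1
    exact le_of_mul_le_mul_right (by linarith [h1]) hsqn
  have hs : 0 < s := lt_of_lt_of_le hm hms
  -- decomposition
  set lam : ℂ := (∑ i, ζ i) / n with hlamdef
  set w : Fin n → ℂ := fun i => ζ i - lam with hwdef
  set a : ℝ := ‖lam‖ with hadef
  set dw : ℝ := cenorm w with hdwdef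
  have hdw0 : 0 ≤ dw := enorm_nonneg' w
  have hwsum : ∑ i, w i = 0 := by
    rw [hwdef]
    rw [Finset.sum_sub_distrib, Finset.sum_const, Finset.card_univ, Fintype.card_fin,
      nsmul_eq_mul, hlamdef]
    field_simp
    ring
  have hζeq : ∀ i, ζ i = w i + lam := by intro i; simp [hwdef]
  -- fact1
  have hζsum : ∑ i, ‖ζ i‖ ^ 2 = 1 := by
    have := enorm_sq_eq ζ
    rw [hζ] at this
    simpa using this.symm
  have fact1 : dw ^ 2 + n * a ^ 2 = 1 := by
    have h := sum_sq_shift w lam hwsum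
    have h2 : ∑ i, ‖w i + lam‖ ^ 2 = 1 := by
      rw [← hζsum]
      exact Finset.sum_congr rfl fun i _ => by rw [← hζeq i]
    rw [h2] at h
    rw [hdwdef, enorm_sq_eq, hadef]
    linarith [h]
  -- distE lower bound
  have hd : dw ≤ distE ζ (Submodule.span ℂ {φ}) := by
    apply le_csInf
    · exact ⟨cenorm (ζ - 0), 0, Submodule.zero_mem _, rfl⟩
    · rintro b ⟨h, hh, rfl⟩
      obtain ⟨c, hc⟩ := Submodule.mem_span_singleton.mp hh
      rw [← hc]
      have heq : ζ - c • φ = fun i => w i + (lam - c) := by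
        funext i
        simp only [Pi.sub_apply, Pi.smul_apply, hφdef, smul_eq_mul, mul_one, hwdef]
        ring
      rw [heq]
      unfold cenorm
      rw [hdwdef]
      unfold cenorm
      apply Real.sqrt_le_sqrt
      rw [sum_sq_shift w (lam - c) hwsum]
      have : 0 ≤ (n:ℝ) * ‖lam - c‖ ^ 2 := by positivity
      linarith
  -- key estimate
  set zb : Fin n → ℂ := fun i => starRingEnd ℂ (ζ i) with hzbdef
  set wb : Fin n → ℂ := fun i => starRingEnd ℂ (w i) with hwbdef
  have hzero : ∀ i, i ≠ k → Y.mulVec zb i = 0 := by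
    intro i hik
    have := congrFun hB i
    simpa [Matrix.mulVec, dotProduct, hik, hzbdef] using this
  have hwbeq : wb = zb - (starRingEnd ℂ lam) • φ := by
    funext i
    simp [hwbdef, hwdef, hzbdef, hφdef, map_sub]
  have hYwb : Y.mulVec wb = Y.mulVec zb - (starRingEnd ℂ lam) • (μ • φ) := by
    rw [hwbeq, Matrix.mulVec_sub, Matrix.mulVec_smul, hY]
  have hentry : ∀ i, i ≠ k → Y.mulVec wb i = -(starRingEnd ℂ lam * μ) := by
    intro i hik
    rw [hYwb]
    simp [hzero i hik, hφdef]
  have hnval : ∀ i, i ≠ k → ‖Y.mulVec wb i‖ ^ 2 = (a * m) ^ 2 := by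
    intro i hik
    rw [hentry i hik]
    simp [hadef, hmdef, norm_mul, mul_pow]
  have hkey : ((n:ℝ) - 1) * (a * m) ^ 2 ≤ cenorm (Y.mulVec wb) ^ 2 := by
    rw [enorm_sq_eq]
    have hsub : (Finset.univ \ {k} : Finset (Fin n)) ⊆ Finset.univ := Finset.subset_univ _
    have hcard : ((Finset.univ \ {k} : Finset (Fin n)).card : ℝ) = (n:ℝ) - 1 := by
      rw [Finset.card_sdiff_of_subset (by simp), Finset.card_univ, Fintype.card_fin]
      simp
      rw [Nat.cast_sub (by omega)]
      simp
    calc ((n:ℝ) - 1) * (a * m) ^ 2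
        = ∑ _i ∈ Finset.univ \ {k}, (a * m) ^ 2 := by
          rw [Finset.sum_const, nsmul_eq_mul, hcard]
      _ = ∑ i ∈ Finset.univ \ {k}, ‖Y.mulVec wb i‖ ^ 2 := by
          apply Finset.sum_congr rfl
          intro i hi
          rw [hnval i (by simpa [Finset.mem_sdiff] using hi)]
      _ ≤ ∑ i, ‖Y.mulVec wb i‖ ^ 2 :=
          Finset.sum_le_sum_of_subset_of_nonneg hsub (fun _ _ _ => sq_nonneg _)
  have hwbnorm : cenorm wb = dw := by
    rw [hdwdef]
    unfold cenorm
    congr 1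
    exact Finset.sum_congr rfl fun i _ => by simp [hwbdef]
  have hle : cenorm (Y.mulVec wb) ≤ s * dw := by
    have := enorm_mulVec_le_sone Y wb
    rwa [hwbnorm] at this
  have hsq : ((n:ℝ) - 1) * (a * m) ^ 2 ≤ (s * dw) ^ 2 := by
    refine hkey.trans ?_
    exact pow_le_pow_left₀ (enorm_nonneg' _) hle 2
  -- final arithmetic
  have ha0 : 0 ≤ a := norm_nonneg _
  rw [show ‖α‖ * σ * Real.sqrt n = m from hmval.symm]
  clear_value φ μ s m lam w a dw zb wb
  clear hB hY hζsum hζeq hwsum hwbeq hYwb hentry hnval hkey hwbnorm hle hzero hζ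
  have hgoal : m / (2 * s) ≤ dw := by
    rw [div_le_iff₀ (by positivity)]
    by_contra hlt
    push_neg at hlt
    have e : (n:ℝ) * a ^ 2 = 1 - dw ^ 2 := by linarith
    have h3 : 0 ≤ ((n:ℝ) - 2) * a ^ 2 * m ^ 2 :=
      mul_nonneg (mul_nonneg (by linarith) (sq_nonneg a)) (sq_nonneg m)
    have h2 : m ^ 2 * (1 - dw ^ 2) ≤ 2 * (s * dw) ^ 2 := by
      have : m ^ 2 * (1 - dw ^ 2) = ((n:ℝ) * a ^ 2) * m ^ 2 := by rw [e]; ring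
      nlinarith [hsq, h3]
    have hdwlt : dw < 1 / 2 := by nlinarith [hs, hms, hlt]
    have hsqlt : (dw * (2 * s)) ^ 2 < m ^ 2 := by
      have h4 : 0 ≤ dw * (2 * s) := by positivity
      exact pow_lt_pow_left₀ hlt h4 (by norm_num)
    have h5 : 2 * (s * dw) ^ 2 < m ^ 2 / 2 := by nlinarith [hsqlt]
    have h6 : m ^ 2 * (1 - dw ^ 2) < m ^ 2 / 2 := lt_of_le_of_lt h2 h5
    have h7 : 1 / 2 < dw ^ 2 := by nlinarith [mul_pos hm hm, h6]
    have h8 : dw ^ 2 < 1 / 4 := by nlinarith [hdwlt, hdw0]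
    linarith
  exact hgoal.trans hd
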